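/- arXiv:2605.11694 — 6 statements merged into one kernel-verified Lean document; each statement's English description precedes it below -/
import Mathlib

section
/- Let {δ_t} be a nonnegative real sequence and E > 0 a constant such that (E/2)·δ_{t+1}² + δ_{t+1} ≤ δ_t for all t ≥ 1. Then for all t ≥ 1, δ_t ≤ max{δ_1, 4/E} / t. -/
theorem stmt0 (δ : ℕ → ℝ) (E : ℝ) (hE : 0 < E)
    (hnn : ∀ t ≥ 1, 0 ≤ δ t)
    (hrec : ∀ t ≥ 1, (E / 2) * (δ (t + 1))^2 + δ (t + 1) ≤ δ t) :
    ∀ t ≥ 1, δ t ≤ max (δ 1) (4 / E) / (t : ℝ) := by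
  set M := max (δ 1) (4 / E) with hMdef
  have hM4 : 4 / E ≤ M := le_max_right _ _
  have hMpos : 0 < M := lt_of_lt_of_le (by positivity) hM4
  have hEM : 4 ≤ E * M := by
    rw [div_le_iff₀ hE] at hM4; linarith
  intro t ht
  induction t, ht using Nat.le_induction with
  | base =>
    simp only [Nat.cast_one, div_one]
    exact le_max_left _ _
  | succ t ht IH =>
    by_contra hcon
    push_neg at hcon
    have hT : (1 : ℝ) ≤ (t : ℝ) := by exact_mod_cast ht
    have hT1 : (0 : ℝ) < (t : ℝ) + 1 := by linarith
    have hkey : (E / 2) * (δ (t + 1))^2 + δ (t + 1) ≤ M / t :=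
      le_trans (hrec t ht) IH
    have hδ' : M / ((t : ℝ) + 1) < δ (t + 1) := by
      push_cast at hcon; linarith
    have hδnn : 0 ≤ δ (t + 1) := hnn (t + 1) (by omega)
    have hmono : (E / 2) * (M / ((t:ℝ) + 1))^2 + M / ((t:ℝ) + 1)
        < (E / 2) * (δ (t + 1))^2 + δ (t + 1) := by
      have h0 : 0 ≤ M / ((t:ℝ) + 1) := by positivity
      nlinarith [mul_pos (sub_pos.mpr hδ') (lt_of_le_of_lt h0 (by linarith : M / ((t:ℝ)+1) < δ (t+1) + M / ((t:ℝ)+1))), hE]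
    have hlt : (E / 2) * (M / ((t:ℝ) + 1))^2 + M / ((t:ℝ) + 1) < M / t :=
      lt_of_lt_of_le hmono hkey
    have hTpos : (0 : ℝ) < (t : ℝ) := by linarith
    have ht0 : (t:ℝ) ≠ 0 := ne_of_gt hTpos
    have ht1' : (t:ℝ) + 1 ≠ 0 := ne_of_gt hT1
    rw [div_pow] at hlt
    field_simp at hlt
    have hEMt : 4 * (t:ℝ) ≤ E * M * t := by nlinarith
    have h4M : 4 * M ≤ E * M ^ 2 := by nlinarith
    nlinarith [mul_pos hTpos hMpos, mul_pos (mul_pos hTpos hT1) hMpos,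
      mul_le_mul_of_nonneg_right h4M (le_of_lt (mul_pos hTpos hT1))]
end

section
/- Let {α_k} be a sequence with α_1 ≤ 1, α_2 ≤ 1, and let D ∈ (0, 1/2) satisfy √(2D) < 1. Suppose α_{k+1} ≤ α_k − α_k²/2 + D for all k ≥ 2, and α_k ∈ [0,1] for all k. Then for all k ≥ 1, α_k ≤ 2/k + √(2D). -/
theorem stmt1 (α : ℕ → ℝ) (D : ℝ) (hD : 0 < D)
    (hDlt : Real.sqrt (2 * D) < 1)
    (hmem : ∀ k, α k ∈ Set.Icc (0:ℝ) 1)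
    (h1 : α 1 ≤ 1) (h2 : α 2 ≤ 1)
    (hrec : ∀ k ≥ 2, α (k + 1) ≤ α k - (α k)^2 / 2 + D) :
    ∀ k ≥ 1, α k ≤ 2 / (k : ℝ) + Real.sqrt (2 * D) := by
  have hs0 : 0 < Real.sqrt (2 * D) := Real.sqrt_pos.mpr (by linarith)
  have hs2 : Real.sqrt (2 * D) ^ 2 = 2 * D := Real.sq_sqrt (by linarith)
  set s := Real.sqrt (2 * D) with hsdef
  have main : ∀ n, 2 ≤ n → α n ≤ 2 / (n : ℝ) + s := by
    intro n hn
    induction n, hn using Nat.le_induction with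
    | base =>
      have : α 2 ≤ 2 / (2:ℝ) + s := by norm_num; linarith
      simpa using this
    | succ n hn ih =>
      have hk2 : (2:ℝ) ≤ (n:ℝ) := by exact_mod_cast hn
      have hn0 : (0:ℝ) < (n:ℝ) := by linarith
      have hrecn := hrec n hn
      obtain ⟨hα0, hα1⟩ := hmem n
      push_cast
      by_cases hc : α n ≤ s
      · have h1' : α n - (α n)^2/2 ≤ s - s^2/2 := by nlinarith
        have h2' : α (n+1) ≤ s := by nlinarith
        have h3' : (0:ℝ) ≤ 2/((n:ℝ)+1) := by positivity
        linarith
      · push_neg at hc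
        set b := α n - s with hb
        have hb0 : 0 < b := by linarith
        have hbk : b ≤ 2/(n:ℝ) := by linarith [ih]
        have ht1 : 2/(n:ℝ) ≤ 1 := by
          rw [div_le_one hn0]; linarith
        have key : α (n+1) - s ≤ b - b^2/2 := by nlinarith
        have g1 : b - b^2/2 ≤ 2/(n:ℝ) - (2/(n:ℝ))^2/2 := by nlinarith
        have g2 : 2/(n:ℝ) - (2/(n:ℝ))^2/2 ≤ 2/((n:ℝ)+1) := by
          have e : 2/(n:ℝ) - (2/(n:ℝ))^2/2 = 2*((n:ℝ)-1)/(n:ℝ)^2 := by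
            field_simp
          rw [e, div_le_div_iff₀ (by positivity) (by positivity)]
          nlinarith
        linarith
  intro k hk
  rcases eq_or_lt_of_le hk with h | h
  · have : k = 1 := h.symm
    subst this
    norm_num
    linarith
  · exact main k h
end

section
/- Let d : ℝ^m → ℝ be concave, differentiable, and (1/β)-smooth (i.e., ‖∇d(λ) − ∇d(μ)‖ ≤ (1/β)‖λ − μ‖). Consider the update λ_{t+1} = λ_t + (β/2)·g_t, where ‖∇d(λ_t) − g_t‖² ≤ 2ε_t/β and d̄_t is a quantity with d(λ_t) ≤ d̄_t ≤ d(λ_t) + ε_t. Then d(λ_{t+1}) ≥ d̄_t + (β/4)‖g_t‖² − 2ε_t. -/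
open InnerProductSpace

/-- Descent lemma: `d (x + v) ≥ d x + ⟪∇d x, v⟫ - L/2 * ‖v‖²` for `L`-Lipschitz gradient. -/
lemma descent_aux {E : Type*} [NormedAddCommGroup E] [InnerProductSpace ℝ E] [CompleteSpace E]
    (d : E → ℝ) (hdiff : Differentiable ℝ d) (L : ℝ) (hL : 0 ≤ L)
    (hlip : ∀ x y, ‖gradient d x - gradient d y‖ ≤ L * ‖x - y‖)
    (x v : E) :
    d (x + v) ≥ d x + inner ℝ (gradient d x) v - L / 2 * ‖v‖ ^ 2 := by
  set φ : ℝ → ℝ := fun t =>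
    d (x + t • v) + (L * ‖v‖ ^ 2 / 2) * t ^ 2 - t * inner ℝ (gradient d x) v with hφ
  have hderiv : ∀ t : ℝ, HasDerivAt φ
      ((inner ℝ (gradient d (x + t • v)) v : ℝ) + (L * ‖v‖ ^ 2) * t
        - inner ℝ (gradient d x) v) t := by
    intro t
    have h1 : HasDerivAt (fun t : ℝ => x + t • v) v t := by
      simpa using ((hasDerivAt_id t).smul_const v).const_add x
    have h2 : HasFDerivAt d (toDual ℝ E (gradient d (x + t • v))) (x + t • v) :=
      (hdiff (x + t • v)).hasGradientAt.hasFDerivAt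
    have h3 : HasDerivAt (fun t : ℝ => d (x + t • v))
        (inner ℝ (gradient d (x + t • v)) v : ℝ) t := by
      have h3' := h2.comp_hasDerivAt t h1
      simp only [toDual_apply_apply] at h3'
      exact h3'
    have h4 : HasDerivAt (fun t : ℝ => (L * ‖v‖ ^ 2 / 2) * t ^ 2)
        ((L * ‖v‖ ^ 2) * t) t := by
      have := (hasDerivAt_pow 2 t).const_mul (L * ‖v‖ ^ 2 / 2)
      rw [show (L * ‖v‖ ^ 2) * t = L * ‖v‖ ^ 2 / 2 * (↑(2:ℕ) * t ^ (2 - 1)) by push_cast; ring]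
      exact this
    have h5 : HasDerivAt (fun t : ℝ => t * (inner ℝ (gradient d x) v : ℝ))
        (inner ℝ (gradient d x) v : ℝ) t := by
      simpa using (hasDerivAt_id t).mul_const (inner ℝ (gradient d x) v : ℝ)
    exact (h3.add h4).sub h5
  have hmono : MonotoneOn φ (Set.Icc 0 1) := by
    apply monotoneOn_of_deriv_nonneg (convex_Icc 0 1)
    · exact Continuous.continuousOn (by
        have := hdiff.continuous
        rw [hφ]; fun_prop)
    · intro t ht
      exact (hderiv t).differentiableAt.differentiableWithinAt
    · intro t ht
      rw [interior_Icc] at ht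
      rw [(hderiv t).deriv]
      have hb : ‖gradient d (x + t • v) - gradient d x‖ ≤ L * t * ‖v‖ := by
        have := hlip (x + t • v) x
        calc ‖gradient d (x + t • v) - gradient d x‖ ≤ L * ‖x + t • v - x‖ := this
          _ = L * t * ‖v‖ := by
            rw [add_sub_cancel_left, norm_smul, Real.norm_eq_abs,
              abs_of_pos ht.1]; ring
      have hinner : (inner ℝ (gradient d (x + t • v) - gradient d x) v : ℝ)
          ≥ -(L * t * ‖v‖ * ‖v‖) := by
        have h := abs_real_inner_le_norm (gradient d (x + t • v) - gradient d x) v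
        have h2 : |(inner ℝ (gradient d (x + t • v) - gradient d x) v : ℝ)|
            ≤ L * t * ‖v‖ * ‖v‖ := by
          refine h.trans ?_
          exact mul_le_mul_of_nonneg_right hb (norm_nonneg v)
        linarith [neg_abs_le (inner ℝ (gradient d (x + t • v) - gradient d x) v : ℝ)]
      rw [inner_sub_left] at hinner
      have : L * t * ‖v‖ * ‖v‖ = L * ‖v‖ ^ 2 * t := by ring
      nlinarith
  have h01 : φ 0 ≤ φ 1 := hmono (by norm_num) (by norm_num) (by norm_num)
  simp only [hφ, zero_smul, add_zero, one_smul] at h01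
  nlinarith

theorem stmt7 {m : ℕ} (β : ℝ) (hβ : 0 < β)
    (d : EuclideanSpace ℝ (Fin m) → ℝ)
    (hconc : ConcaveOn ℝ Set.univ d) (hdiff : Differentiable ℝ d)
    (hsmooth : ∀ x y, ‖gradient d x - gradient d y‖ ≤ (1 / β) * ‖x - y‖)
    (lamt g : EuclideanSpace ℝ (Fin m)) (εt : ℝ) (hε : 0 ≤ εt)
    (hg : ‖gradient d lamt - g‖^2 ≤ 2 * εt / β)
    (dbar : ℝ) (hdbar1 : d lamt ≤ dbar) (hdbar2 : dbar ≤ d lamt + εt) :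
    d (lamt + (β / 2) • g) ≥ dbar + (β / 4) * ‖g‖^2 - 2 * εt := by
  have hdesc := descent_aux d hdiff (1 / β) (by positivity) hsmooth lamt ((β / 2) • g)
  have hnorm : ‖(β / 2) • g‖ ^ 2 = (β / 2) ^ 2 * ‖g‖ ^ 2 := by
    rw [norm_smul, mul_pow, Real.norm_eq_abs, sq_abs]
  have hin : (inner ℝ (gradient d lamt) ((β / 2) • g) : ℝ)
      = (β / 2) * inner ℝ (gradient d lamt) g := by
    rw [real_inner_smul_right]
  -- inner product bound
  have hib : (inner ℝ (gradient d lamt) g : ℝ) ≥ (3 / 4) * ‖g‖ ^ 2 - 2 * εt / β := by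
    have hsplit : (inner ℝ (gradient d lamt) g : ℝ)
        = inner ℝ (gradient d lamt - g) g + ‖g‖ ^ 2 := by
      rw [inner_sub_left, real_inner_self_eq_norm_sq]; ring
    have habs : |(inner ℝ (gradient d lamt - g) g : ℝ)| ≤ ‖gradient d lamt - g‖ * ‖g‖ :=
      abs_real_inner_le_norm _ _
    have hyoung : ‖gradient d lamt - g‖ * ‖g‖
        ≤ ‖gradient d lamt - g‖ ^ 2 + (1 / 4) * ‖g‖ ^ 2 := by
      nlinarith [sq_nonneg (‖gradient d lamt - g‖ - ‖g‖ / 2)]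
    have := neg_abs_le (inner ℝ (gradient d lamt - g) g : ℝ)
    nlinarith
  rw [hnorm, hin] at hdesc
  have hβ' : (0:ℝ) < β := hβ
  have key : 1 / β / 2 * ((β / 2) ^ 2 * ‖g‖ ^ 2) = β / 8 * ‖g‖ ^ 2 := by
    field_simp; ring
  rw [key] at hdesc
  have hmul : β / 2 * (3 / 4 * ‖g‖ ^ 2 - 2 * εt / β) ≤ β / 2 * inner ℝ (gradient d lamt) g :=
    mul_le_mul_of_nonneg_left hib (by positivity)
  have heq : β / 2 * (3 / 4 * ‖g‖ ^ 2 - 2 * εt / β) = 3 * β / 8 * ‖g‖ ^ 2 - εt := by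
    field_simp; ring
  rw [heq] at hmul
  linarith
end

section
/- Let {δ_t} be nonnegative with δ_{t+1} ≤ δ_t − κ·δ_t² + ω·ε_t where κ, ω > 0 and ε_t = σ/t² with σ > 0. Then for all t ≥ 1, δ_t ≤ C/t, where C = (4/κ)(1 + √(2ωσκ(ωσκ + 1))) + 4·max{δ_1, 4/κ}. -/
set_option maxHeartbeats 1000000


theorem stmt11 (δ : ℕ → ℝ) (κ ω σ : ℝ) (hκ : 0 < κ) (hω : 0 < ω) (hσ : 0 < σ)
    (hnn : ∀ t, 0 ≤ δ t)
    (hrec : ∀ t ≥ 1, δ (t + 1) ≤ δ t - κ * (δ t)^2 + ω * (σ / (t : ℝ)^2)) :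
    ∀ t ≥ 1, δ t ≤ ((4 / κ) * (1 + Real.sqrt (2 * ω * σ * κ * (ω * σ * κ + 1)))
        + 4 * max (δ 1) (4 / κ)) / (t : ℝ) := by
  have hs0 : 0 ≤ Real.sqrt (2 * ω * σ * κ * (ω * σ * κ + 1)) := Real.sqrt_nonneg _
  have hsq : ω * σ * κ ≤ Real.sqrt (2 * ω * σ * κ * (ω * σ * κ + 1)) := by
    have h1 : ω * σ * κ = Real.sqrt ((ω * σ * κ)^2) := (Real.sqrt_sq (by positivity)).symm
    rw [h1]
    apply Real.sqrt_le_sqrt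
    nlinarith [mul_pos (mul_pos hω hσ) hκ]
  have hk4 : (0:ℝ) < 4 / κ := by positivity
  have hmax : (4:ℝ)/κ ≤ max (δ 1) (4/κ) := le_max_right _ _
  have hm1 : δ 1 ≤ max (δ 1) (4/κ) := le_max_left _ _
  generalize hCdef : (4 / κ) * (1 + Real.sqrt (2 * ω * σ * κ * (ω * σ * κ + 1)))
      + 4 * max (δ 1) (4 / κ) = C
  have hC1 : 20/κ + 4*(ω*σ) ≤ C := by
    rw [← hCdef]
    have h4 : (4/κ) * (ω*σ*κ) = 4*(ω*σ) := by field_simp <;> ring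
    have h5 : (20:ℝ)/κ = 5*(4/κ) := by ring
    nlinarith [mul_le_mul_of_nonneg_left hsq (le_of_lt hk4)]
  have hC1' : 20 + 4*(ω*σ)*κ ≤ κ * C := by
    have h := mul_le_mul_of_nonneg_left hC1 (le_of_lt hκ)
    have h20 : κ * (20/κ) = 20 := by field_simp <;> ring
    nlinarith
  have hC0 : 0 < C := by nlinarith [mul_pos (mul_pos (mul_pos hω hσ) hκ) hκ]
  have h20k : (0:ℝ) < 20/κ := by positivity
  have hC3 : 4*(ω*σ) ≤ C := by linarith
  have hC2 : C + ω*σ ≤ κ * C^2 := by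
    nlinarith [mul_le_mul_of_nonneg_right hC1' hC0.le, mul_pos hω hσ,
      mul_nonneg (mul_nonneg (mul_nonneg hω.le hσ.le) hκ.le) hC0.le]
  have hbase : δ 1 ≤ C := by
    rw [← hCdef]
    nlinarith [mul_nonneg hk4.le
      (by linarith : (0:ℝ) ≤ 1 + Real.sqrt (2 * ω * σ * κ * (ω * σ * κ + 1)))]
  intro t
  induction t with
  | zero => intro h; omega
  | succ n ih =>
    intro _
    by_cases hn0 : n = 0
    · subst hn0; simpa using hbase
    · have hn : 1 ≤ n := Nat.one_le_iff_ne_zero.mpr hn0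
      have ihn : δ n ≤ C / (n:ℝ) := ih hn
      have hrecn := hrec n hn
      have htn : (1:ℝ) ≤ (n:ℝ) := by exact_mod_cast hn
      have htpos : (0:ℝ) < (n:ℝ) := by linarith
      push_cast
      by_cases hcase : 2*κ*C ≤ (n:ℝ)
      · -- far regime: the map x ↦ x - κx² is monotone on [0, 1/(2κ)]
        have hb : C/(n:ℝ) ≤ 1/(2*κ) := by
          rw [div_le_div_iff₀ htpos (by positivity)]
          nlinarith
        have hxb : κ * (C/(n:ℝ)) ≤ 1/2 := by
          have h := mul_le_mul_of_nonneg_left hb hκ.le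
          have h2κ : κ * (1/(2*κ)) = 1/2 := by field_simp <;> ring
          linarith
        have hyb : κ * δ n ≤ 1/2 :=
          le_trans (mul_le_mul_of_nonneg_left ihn hκ.le) hxb
        have hfac : 0 ≤ (C/(n:ℝ) - δ n) * (1 - κ*(C/(n:ℝ)) - κ*(δ n)) :=
          mul_nonneg (by linarith) (by linarith)
        have hgmono : δ n - κ * (δ n)^2 ≤ C/(n:ℝ) - κ * (C/(n:ℝ))^2 := by nlinarith [hfac]
        have hkey : C/(n:ℝ) - κ * (C/(n:ℝ))^2 + ω * (σ/(n:ℝ)^2) ≤ C/((n:ℝ)+1) := by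
          rw [show C/(n:ℝ) - κ * (C/(n:ℝ))^2 + ω * (σ/(n:ℝ)^2)
              = (C*(n:ℝ) - κ*C^2 + ω*σ)/(n:ℝ)^2 by field_simp]
          rw [div_le_div_iff₀ (by positivity) (by positivity)]
          nlinarith [mul_le_mul_of_nonneg_right hC2 (le_of_lt htpos), mul_pos hω hσ]
        linarith
      · -- near regime: use δ - κδ² ≤ 1/(4κ)
        push_neg at hcase
        have hquad : δ n - κ * (δ n)^2 ≤ 1/(4*κ) := by
          have h14 : κ * (1/(4*κ)) = 1/4 := by field_simp <;> ring
          nlinarith [sq_nonneg (κ * δ n - 1/2), hκ]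
        have hkey : 1/(4*κ) + ω * (σ/(n:ℝ)^2) ≤ C/((n:ℝ)+1) := by
          rw [show 1/(4*κ) + ω * (σ/(n:ℝ)^2)
              = ((n:ℝ)^2 + 4*κ*(ω*σ))/(4*κ*(n:ℝ)^2) by field_simp]
          rw [div_le_div_iff₀ (by positivity) (by positivity)]
          have h3 : (0:ℝ) ≤ ((n:ℝ)-1)*(2*(n:ℝ)+1) := by nlinarith
          nlinarith [mul_le_mul_of_nonneg_right (le_of_lt hcase) (sq_nonneg (n:ℝ)),
            mul_le_mul_of_nonneg_right hC1' (sq_nonneg (n:ℝ)),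
            mul_nonneg (by positivity : (0:ℝ) ≤ ω*σ*κ) h3]
        linarith
end

section
/- Let G : Π → ℝ be L-smooth on Π = (Δ_A)^S, and suppose G(π_{k+1}) ≥ max_{π∈Π} { G(π) − C₁‖π − π_k‖² } with C₁ = (L/2)(1 + 1/((1−γ)ρ_min)). Suppose additionally that the occupancy-measure map h : μ ↦ π is (2/ρ_min)-Lipschitz from (ℝ^{SA}, ‖·‖₁) to (ℝ^{SA}, ‖·‖₂), and ‖μ − μ'‖₁ ≤ 2/(1−γ) for all occupancy measures. Then, with π* = argmax G and δ_k = G(π*) − G(π_k), the recursion δ_{k+1} ≤ min_{α∈[0,1]} { (1−α)δ_k + α²C₂ } holds with C₂ = 16C₁/(ρ_min²(1−γ)²), provided G(π) = F(μ^π) for a concave F over the convex set of occupancy measures. -/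
theorem stmt16 {ι : Type*} [Fintype ι]
    (Pol K : Set (EuclideanSpace ℝ ι)) (hK : Convex ℝ K)
    (F G : EuclideanSpace ℝ ι → ℝ)
    (occ h : EuclideanSpace ℝ ι → EuclideanSpace ℝ ι)
    (ρmin γ L : ℝ) (hρ : 0 < ρmin) (hγ : 0 ≤ γ) (hγ1 : γ < 1) (hL : 0 ≤ L)
    (hFconc : ConcaveOn ℝ K F)
    (hG : ∀ π ∈ Pol, G π = F (occ π))
    (hocc : ∀ π ∈ Pol, occ π ∈ K)
    (hinv : ∀ π ∈ Pol, h (occ π) = π)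
    (hinv' : ∀ ν ∈ K, h ν ∈ Pol ∧ occ (h ν) = ν)
    (hLip : ∀ ν ∈ K, ∀ ν' ∈ K, ‖h ν - h ν'‖ ≤ (2 / ρmin) * ∑ i, |ν i - ν' i|)
    (hdiam : ∀ ν ∈ K, ∀ ν' ∈ K, ∑ i, |ν i - ν' i| ≤ 2 / (1 - γ))
    (πstar πk πk1 : EuclideanSpace ℝ ι)
    (hπstar : πstar ∈ Pol) (hπk : πk ∈ Pol) (hπk1 : πk1 ∈ Pol)
    (hmax : IsMaxOn G Pol πstar)
    (himp : ∀ π ∈ Pol, G πk1 ≥ G π - ((L / 2) * (1 + 1 / ((1 - γ) * ρmin))) * ‖π - πk‖^2) :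
    ∀ α ∈ Set.Icc (0:ℝ) 1,
      G πstar - G πk1 ≤ (1 - α) * (G πstar - G πk)
        + α^2 * (16 * ((L / 2) * (1 + 1 / ((1 - γ) * ρmin))) / (ρmin^2 * (1 - γ)^2)) := by
  intro α hα
  obtain ⟨hα0, hα1⟩ := hα
  have h1γ : 0 < 1 - γ := by linarith
  set C1 := (L / 2) * (1 + 1 / ((1 - γ) * ρmin)) with hC1def
  have hC1 : 0 ≤ C1 := by
    have h2 : 0 ≤ 1 / ((1 - γ) * ρmin) := by positivity
    exact mul_nonneg (by linarith) (by linarith)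
  set μα := (1 - α) • occ πk + α • occ πstar with hμdef
  have hμK : μα ∈ K := hK (hocc πk hπk) (hocc πstar hπstar) (by linarith) hα0 (by ring)
  have hF : (1-α) * F (occ πk) + α * F (occ πstar) ≤ F μα :=
    hFconc.2 (hocc πk hπk) (hocc πstar hπstar) (by linarith) hα0 (by ring)
  obtain ⟨hπαP, hπαocc⟩ := hinv' μα hμK
  set πα := h μα with hπαdef
  have hGα : G πα = F μα := by rw [hG πα hπαP, hπαocc]
  have hsum : ∀ i, μα i - occ πk i = α * (occ πstar i - occ πk i) := by
    intro i
    simp only [hμdef, PiLp.add_apply, PiLp.smul_apply, smul_eq_mul]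
    ring
  have hnorm : ‖πα - πk‖ ≤ α * (4 / (ρmin * (1 - γ))) := by
    have h1 : ‖h μα - h (occ πk)‖ ≤ (2/ρmin) * ∑ i, |μα i - occ πk i| :=
      hLip μα hμK (occ πk) (hocc πk hπk)
    have h2 : ∑ i, |μα i - occ πk i| = α * ∑ i, |occ πstar i - occ πk i| := by
      rw [Finset.mul_sum]
      refine Finset.sum_congr rfl fun i _ => ?_
      rw [hsum i, abs_mul, abs_of_nonneg hα0]
    have h3 : ∑ i, |occ πstar i - occ πk i| ≤ 2/(1-γ) :=
      hdiam _ (hocc πstar hπstar) _ (hocc πk hπk)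
    rw [hinv πk hπk] at h1
    calc ‖πα - πk‖ ≤ (2/ρmin) * (α * ∑ i, |occ πstar i - occ πk i|) := by
          rw [← h2]; exact h1
      _ ≤ (2/ρmin) * (α * (2/(1-γ))) :=
          mul_le_mul_of_nonneg_left (mul_le_mul_of_nonneg_left h3 hα0) (by positivity)
      _ = α * (4 / (ρmin * (1 - γ))) := by field_simp; ring
  have hsq : ‖πα - πk‖^2 ≤ α^2 * (16/(ρmin^2*(1-γ)^2)) := by
    have h4 : ‖πα - πk‖^2 ≤ (α * (4 / (ρmin * (1 - γ))))^2 :=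
      pow_le_pow_left₀ (norm_nonneg _) hnorm 2
    calc ‖πα - πk‖^2 ≤ (α * (4 / (ρmin * (1 - γ))))^2 := h4
      _ = α^2 * (16/(ρmin^2*(1-γ)^2)) := by field_simp; ring
  have himpα := himp πα hπαP
  have h5 : C1 * ‖πα - πk‖^2 ≤ C1 * (α^2 * (16/(ρmin^2*(1-γ)^2))) :=
    mul_le_mul_of_nonneg_left hsq hC1
  have h6 : C1 * (α^2 * (16/(ρmin^2*(1-γ)^2))) = α^2 * (16 * C1 / (ρmin^2 * (1-γ)^2)) := by
    ring
  have hGk : G πk = F (occ πk) := hG πk hπk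
  have hGs : G πstar = F (occ πstar) := hG πstar hπstar
  nlinarith [hF, hGα, himpα, h5, h6]
end

section
/- Let δ_{k+1} ≤ min_{α∈[0,1]} { (1−α)δ_k + α²C } for all k ≥ 1 with δ_k ≥ 0 and C > 0. Then δ_K ≤ 4C/K for all K ≥ 2. -/
theorem stmt17 (δ : ℕ → ℝ) (C : ℝ) (hC : 0 < C) (hnn : ∀ k, 0 ≤ δ k)
    (hrec : ∀ k ≥ 1, ∀ α ∈ Set.Icc (0:ℝ) 1, δ (k + 1) ≤ (1 - α) * δ k + α^2 * C) :
    ∀ K ≥ 2, δ K ≤ 4 * C / (K : ℝ) := by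
  have h4C : (0:ℝ) < 4 * C := by linarith
  have step : ∀ n ≥ 1, δ n ≤ 2 * C → δ (n + 1) ≤ δ n - (δ n)^2 / (4 * C) := by
    intro n hn hd
    have hα : δ n / (2 * C) ∈ Set.Icc (0:ℝ) 1 := by
      constructor
      · exact div_nonneg (hnn n) (by linarith)
      · rw [div_le_one (by linarith)]; linarith
    have hr := hrec n hn _ hα
    have e : (1 - δ n / (2 * C)) * δ n + (δ n / (2 * C))^2 * C
        = δ n - (δ n)^2 / (4 * C) := by
      field_simp
      ring
    linarith [e ▸ hr]
  have h2 : δ 2 ≤ C := by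
    by_cases h : δ 1 ≤ 2 * C
    · have hk := step 1 le_rfl h
      have hcancel : (δ 1)^2 / (4 * C) * (4 * C) = (δ 1)^2 :=
        div_mul_cancel₀ _ (ne_of_gt h4C)
      nlinarith [sq_nonneg (δ 1 - 2 * C)]
    · have := hrec 1 le_rfl 1 (by norm_num)
      simpa using this
  intro K hK
  induction K, hK using Nat.le_induction with
  | base =>
    rw [le_div_iff₀ (by norm_num)]
    push_cast
    linarith
  | succ n hn ih =>
    have hn2 : (2:ℝ) ≤ (n:ℝ) := by exact_mod_cast hn
    have hnpos : (0:ℝ) < (n:ℝ) := by linarith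
    set y : ℝ := 4 * C / (n:ℝ) with hy
    have hy0 : 0 ≤ y := by positivity
    have hyn : y * (n:ℝ) = 4 * C := div_mul_cancel₀ _ (ne_of_gt hnpos)
    have hy2C : y ≤ 2 * C := by
      rw [hy, div_le_iff₀ hnpos]; nlinarith
    have hd2C : δ n ≤ 2 * C := le_trans ih hy2C
    have hk := step n (le_trans (by norm_num) hn) hd2C
    have hc1 : (δ n)^2 / (4 * C) * (4 * C) = (δ n)^2 :=
      div_mul_cancel₀ _ (ne_of_gt h4C)
    have hc2 : y^2 / (4 * C) * (4 * C) = y^2 :=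
      div_mul_cancel₀ _ (ne_of_gt h4C)
    have hmono : δ n - (δ n)^2 / (4 * C) ≤ y - y^2 / (4 * C) := by
      nlinarith [mul_nonneg (sub_nonneg.mpr ih) (by linarith [hd2C, hy2C] : (0:ℝ) ≤ 4 * C - y - δ n)]
    have final : (y - y^2 / (4 * C)) * ((n:ℝ) + 1) ≤ 4 * C := by
      nlinarith [sq_nonneg y, mul_nonneg hy0 hy0]
    rw [le_div_iff₀ (by push_cast; linarith)]
    push_cast
    nlinarith [hk, hmono, final, hnn (n+1)]
end
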